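/- Let 0 < α ≤ 1. Then the sequence m ↦ S_α(m) is nondecreasing in m on the positive integers; consequently sup_{m≥1} S_α(m) = lim_{m→∞} S_α(m) = 2/α. -/

import Mathlib

/-- `S α m = m^{-α} ∑_{n=1}^m n^{α-1} + m^{α} ∑_{n=m+1}^∞ n^{-α-1}`, where the tail sum
over `n > m` is written as `∑_{k≥0} (m+1+k)^{-α-1}`. -/
noncomputable def S (α : ℝ) (m : ℕ+) : ℝ :=
  (m : ℝ) ^ (-α) * ∑ n ∈ Finset.Icc 1 (m : ℕ), (n : ℝ) ^ (α - 1) +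
    (m : ℝ) ^ α * ∑' k : ℕ, ((m : ℝ) + 1 + (k : ℝ)) ^ (-α - 1)

namespace SAux

open Real Filter Finset

noncomputable def A (α : ℝ) (m : ℕ) : ℝ := ∑ n ∈ Finset.Icc 1 m, (n : ℝ) ^ (α - 1)

noncomputable def B (α : ℝ) (m : ℕ) : ℝ := ∑' k : ℕ, ((m : ℝ) + 1 + (k : ℝ)) ^ (-α - 1)

noncomputable def T (α : ℝ) (m : ℕ) : ℝ := (m : ℝ) ^ (-α) * A α m + (m : ℝ) ^ α * B α m

/-- Mean value theorem bounds for the slope of `t ↦ t^(β+1)/(β+1)` on `[a,a+1]`. -/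
lemma slope_bd {β : ℝ} (hβ0 : β ≤ 0) (hβ1 : β + 1 ≠ 0) {a : ℝ} (ha : 0 < a) :
    (a + 1) ^ β ≤ ((a + 1) ^ (β + 1) - a ^ (β + 1)) / (β + 1) ∧
    ((a + 1) ^ (β + 1) - a ^ (β + 1)) / (β + 1) ≤ a ^ β := by
  have hab : a < a + 1 := by linarith
  have hcont : ContinuousOn (fun t : ℝ => t ^ (β + 1) / (β + 1)) (Set.Icc a (a + 1)) := by
    intro t ht
    have ht0 : t ≠ 0 := by have := ht.1; intro h; rw [h] at this; linarith
    exact ((Real.continuousAt_rpow_const t (β + 1) (Or.inl ht0)).div_const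
      (β + 1)).continuousWithinAt
  have hderiv : ∀ x ∈ Set.Ioo a (a + 1),
      HasDerivAt (fun t : ℝ => t ^ (β + 1) / (β + 1)) (x ^ β) x := by
    intro x hx
    have hx0 : x ≠ 0 := by have := hx.1; intro h; rw [h] at this; linarith
    have h := (Real.hasDerivAt_rpow_const (x := x) (p := β + 1) (Or.inl hx0)).div_const (β + 1)
    have e : (β + 1) * x ^ (β + 1 - 1) / (β + 1) = x ^ β := by
      rw [add_sub_cancel_right]
      exact mul_div_cancel_left₀ _ hβ1
    rwa [e] at h
  obtain ⟨c, hc, hceq⟩ := exists_hasDerivAt_eq_slope _ _ hab hcont hderiv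
  have hc0 : 0 < c := lt_trans ha hc.1
  have hval : c ^ β = ((a + 1) ^ (β + 1) - a ^ (β + 1)) / (β + 1) := by
    rw [hceq]
    rw [add_sub_cancel_left, div_one, sub_div]
  constructor
  · rw [← hval]
    exact Real.rpow_le_rpow_of_nonpos hc0 hc.2.le hβ0
  · rw [← hval]
    exact Real.rpow_le_rpow_of_nonpos ha hc.1.le hβ0

lemma step_bd {α : ℝ} (hα : 0 < α) {a : ℝ} (ha : 0 < a) (hα1 : α ≤ 1) :
    (a + 1) ^ (α - 1) ≤ ((a + 1) ^ α - a ^ α) / α ∧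
    ((a + 1) ^ α - a ^ α) / α ≤ a ^ (α - 1) := by
  have h := slope_bd (β := α - 1) (by linarith) (by intro hh; simp at hh; linarith) ha
  rw [sub_add_cancel] at h
  exact h

lemma tail_bd {α : ℝ} (hα : 0 < α) {a : ℝ} (ha : 0 < a) :
    (a + 1) ^ (-α - 1) ≤ (a ^ (-α) - (a + 1) ^ (-α)) / α ∧
    (a ^ (-α) - (a + 1) ^ (-α)) / α ≤ a ^ (-α - 1) := by
  have h := slope_bd (β := -α - 1) (by linarith) (by intro hh; simp at hh; linarith) ha
  have e : (-α - 1) + 1 = -α := by ring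
  rw [e] at h
  have e2 : ((a + 1) ^ (-α) - a ^ (-α)) / (-α) = (a ^ (-α) - (a + 1) ^ (-α)) / α := by
    rw [div_neg, ← neg_div, neg_sub]
  rw [e2] at h
  exact h

lemma summable_tail {α : ℝ} (hα : 0 < α) (m : ℕ) :
    Summable (fun k : ℕ => ((m : ℝ) + 1 + (k : ℝ)) ^ (-α - 1)) := by
  have h0 : Summable (fun n : ℕ => (n : ℝ) ^ (-α - 1)) :=
    Real.summable_nat_rpow.2 (by linarith)
  have h1 := (summable_nat_add_iff (m + 1)).2 h0
  refine h1.congr fun k => ?_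
  congr 1
  push_cast
  ring

lemma hasSum_sub_succ {f : ℕ → ℝ} (hmono : ∀ k, f (k + 1) ≤ f k)
    (hlim : Tendsto f atTop (nhds 0)) : HasSum (fun k => f k - f (k + 1)) (f 0) := by
  rw [hasSum_iff_tendsto_nat_of_nonneg (fun k => sub_nonneg.2 (hmono k))]
  simp only [Finset.sum_range_sub']
  simpa using tendsto_const_nhds.sub hlim

lemma hasSum_tele {α : ℝ} (hα : 0 < α) {c : ℝ} (hc : 0 < c) :
    HasSum (fun k : ℕ => ((c + (k : ℝ)) ^ (-α) - (c + (k : ℝ) + 1) ^ (-α)) / α)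
      (c ^ (-α) / α) := by
  have hpos : ∀ k : ℕ, (0 : ℝ) < c + (k : ℝ) := fun k => by positivity
  have h := hasSum_sub_succ (f := fun k : ℕ => (c + (k : ℝ)) ^ (-α))
    (fun k => Real.rpow_le_rpow_of_nonpos (hpos k) (by push_cast; linarith) (by linarith))
    ?_
  · have h2 := h.div_const α
    simp only [Nat.cast_zero, add_zero] at h2
    refine h2.congr_fun fun k => ?_
    congr 2
    push_cast
    ring
  · have hb : Tendsto (fun k : ℕ => c + (k : ℝ)) atTop atTop :=
      tendsto_atTop_add_const_left _ c tendsto_natCast_atTop_atTop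
    exact (tendsto_rpow_neg_atTop hα).comp hb

lemma B_ge {α : ℝ} (hα : 0 < α) (m : ℕ) : ((m : ℝ) + 1) ^ (-α) / α ≤ B α m := by
  have htele := hasSum_tele hα (c := (m : ℝ) + 1) (by positivity)
  simp only [B]
  refine hasSum_le (fun k => ?_) htele (summable_tail hα m).hasSum
  exact (tail_bd hα (a := (m : ℝ) + 1 + (k : ℝ)) (by positivity)).2

lemma B_le {α : ℝ} (hα : 0 < α) {m : ℕ} (hm : 1 ≤ m) : B α m ≤ (m : ℝ) ^ (-α) / α := by
  have hm1 : (1 : ℝ) ≤ (m : ℝ) := by exact_mod_cast hm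
  have htele := hasSum_tele hα (c := (m : ℝ)) (by linarith)
  simp only [B]
  refine hasSum_le (fun k => ?_) (summable_tail hα m).hasSum htele
  have ha : (0 : ℝ) < (m : ℝ) + (k : ℝ) := by positivity
  have h := (tail_bd hα (a := (m : ℝ) + (k : ℝ)) ha).1
  rw [show (m : ℝ) + 1 + (k : ℝ) = (m : ℝ) + (k : ℝ) + 1 by ring]
  exact h

lemma B_nonneg {α : ℝ} (hα : 0 < α) (m : ℕ) : 0 ≤ B α m :=
  le_trans (by positivity) (B_ge hα m)

lemma A_nonneg (α : ℝ) (m : ℕ) : 0 ≤ A α m :=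
  Finset.sum_nonneg fun n _ => Real.rpow_nonneg (Nat.cast_nonneg n) _

lemma A_rec (α : ℝ) (m : ℕ) : A α (m + 1) = A α m + ((m : ℝ) + 1) ^ (α - 1) := by
  rw [A, A, Finset.sum_Icc_succ_top (Nat.le_add_left 1 m)]
  push_cast
  ring

lemma B_rec {α : ℝ} (hα : 0 < α) (m : ℕ) :
    B α m = ((m : ℝ) + 1) ^ (-α - 1) + B α (m + 1) := by
  rw [B, Summable.tsum_eq_zero_add (summable_tail hα m)]
  congr 1
  · norm_num
  · rw [B]
    refine tsum_congr fun k => ?_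
    congr 1
    push_cast
    ring

lemma A_le {α : ℝ} (hα : 0 < α) (hα1 : α ≤ 1) :
    ∀ m : ℕ, 1 ≤ m → A α m ≤ (m : ℝ) ^ α / α := by
  intro m hm
  induction m, hm using Nat.le_induction with
  | base =>
    have : A α 1 = 1 := by
      rw [A]; simp [Real.one_rpow]
    rw [this]
    rw [Nat.cast_one, Real.one_rpow, le_div_iff₀ hα, one_mul]
    exact hα1
  | succ n hn ih =>
    have hn1 : (1 : ℝ) ≤ (n : ℝ) := by exact_mod_cast hn
    have hstep := (step_bd hα (a := (n : ℝ)) (by linarith) hα1).1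
    rw [A_rec]
    push_cast
    rw [← div_sub_div_same] at hstep
    linarith [hstep, ih]

lemma A_ge {α : ℝ} (hα : 0 < α) (hα1 : α ≤ 1) :
    ∀ m : ℕ, 1 ≤ m → ((m : ℝ) + 1) ^ α / α - 1 / α ≤ A α m := by
  intro m hm
  induction m, hm using Nat.le_induction with
  | base =>
    have hA : A α 1 = 1 := by rw [A]; simp [Real.one_rpow]
    have h := (step_bd hα (a := (1 : ℝ)) one_pos hα1).2
    rw [Real.one_rpow, Real.one_rpow] at h
    rw [hA, Nat.cast_one]
    rw [div_sub_div_same]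
    linarith [h]
  | succ n hn ih =>
    have hn1 : (1 : ℝ) ≤ (n : ℝ) := by exact_mod_cast hn
    have hstep := (step_bd hα (a := (n : ℝ) + 1) (by linarith) hα1).2
    rw [A_rec]
    push_cast
    rw [← div_sub_div_same] at hstep
    linarith [hstep, ih]

lemma rpow_mul_rpow_neg {x : ℝ} (hx : 0 < x) (α : ℝ) : x ^ (-α) * x ^ α = 1 := by
  rw [← Real.rpow_add hx]
  simp

lemma T_step {α : ℝ} (hα : 0 < α) (hα1 : α ≤ 1) (m : ℕ) (hm : 1 ≤ m) :
    T α m ≤ T α (m + 1) := by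
  have hm1 : (1 : ℝ) ≤ (m : ℝ) := by exact_mod_cast hm
  have hP : (0 : ℝ) < (m : ℝ) := by linarith
  have hQ : (0 : ℝ) < (m : ℝ) + 1 := by linarith
  set P : ℝ := (m : ℝ) with hPdef
  have key : T α (m + 1) - T α m =
      ((P + 1) ^ (-α) - P ^ (-α)) * A α m + ((P + 1) ^ α - P ^ α) * B α m := by
    rw [T, T, A_rec, B_rec hα m]
    push_cast
    have e1 : (P + 1) ^ (-α) * (P + 1) ^ (α - 1) = (P + 1) ^ α * (P + 1) ^ (-α - 1) := by
      rw [← Real.rpow_add hQ, ← Real.rpow_add hQ]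
      ring_nf
    linear_combination e1
  have hA := A_le hα hα1 m hm
  have hAnn := A_nonneg α m
  have hB := B_ge hα m
  have h3 : (P + 1) ^ (-α) ≤ P ^ (-α) :=
    Real.rpow_le_rpow_of_nonpos hP (by linarith) (by linarith)
  have h4 : P ^ α ≤ (P + 1) ^ α := Real.rpow_le_rpow hP.le (by linarith) hα.le
  have hinv : P ^ (-α) * P ^ α = 1 := rpow_mul_rpow_neg hP α
  have hinvQ : (P + 1) ^ (-α) * (P + 1) ^ α = 1 := rpow_mul_rpow_neg hQ α
  have e2 : (P ^ (-α) - (P + 1) ^ (-α)) * A α m ≤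
      (P ^ (-α) - (P + 1) ^ (-α)) * (P ^ α / α) :=
    mul_le_mul_of_nonneg_left hA (by linarith)
  have e3 : ((P + 1) ^ α - P ^ α) * ((P + 1) ^ (-α) / α) ≤
      ((P + 1) ^ α - P ^ α) * B α m :=
    mul_le_mul_of_nonneg_left hB (by linarith)
  have e4 : (P ^ (-α) - (P + 1) ^ (-α)) * (P ^ α / α) =
      ((P + 1) ^ α - P ^ α) * ((P + 1) ^ (-α) / α) := by
    rw [mul_div_assoc', mul_div_assoc']
    congr 1
    linear_combination hinv - hinvQ
  linarith [key, e2, e3, e4]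

lemma T_le {α : ℝ} (hα : 0 < α) (hα1 : α ≤ 1) (m : ℕ) (hm : 1 ≤ m) : T α m ≤ 2 / α := by
  have hm1 : (1 : ℝ) ≤ (m : ℝ) := by exact_mod_cast hm
  have hP : (0 : ℝ) < (m : ℝ) := by linarith
  have hA := A_le hα hα1 m hm
  have hB := B_le hα hm
  have hinv : (m : ℝ) ^ (-α) * (m : ℝ) ^ α = 1 := rpow_mul_rpow_neg hP α
  have hu : (0 : ℝ) ≤ (m : ℝ) ^ (-α) := Real.rpow_nonneg hP.le _
  have hp : (0 : ℝ) ≤ (m : ℝ) ^ α := Real.rpow_nonneg hP.le _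
  have e1 : (m : ℝ) ^ (-α) * A α m ≤ (m : ℝ) ^ (-α) * ((m : ℝ) ^ α / α) :=
    mul_le_mul_of_nonneg_left hA hu
  have e2 : (m : ℝ) ^ α * B α m ≤ (m : ℝ) ^ α * ((m : ℝ) ^ (-α) / α) :=
    mul_le_mul_of_nonneg_left hB hp
  have e3 : (m : ℝ) ^ (-α) * ((m : ℝ) ^ α / α) + (m : ℝ) ^ α * ((m : ℝ) ^ (-α) / α)
      = 2 / α := by
    rw [mul_div_assoc', mul_div_assoc']
    rw [← add_div]
    congr 1
    linear_combination 2 * hinv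
  rw [T]
  linarith [e1, e2, e3]

lemma T_ge {α : ℝ} (hα : 0 < α) (hα1 : α ≤ 1) (m : ℕ) (hm : 1 ≤ m) :
    ((m : ℝ) ^ (-α) * ((m : ℝ) + 1) ^ α - (m : ℝ) ^ (-α)
      + (m : ℝ) ^ α * ((m : ℝ) + 1) ^ (-α)) / α ≤ T α m := by
  have hm1 : (1 : ℝ) ≤ (m : ℝ) := by exact_mod_cast hm
  have hP : (0 : ℝ) < (m : ℝ) := by linarith
  have hA := A_ge hα hα1 m hm
  have hB := B_ge hα m
  have hu : (0 : ℝ) ≤ (m : ℝ) ^ (-α) := Real.rpow_nonneg hP.le _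
  have hp : (0 : ℝ) ≤ (m : ℝ) ^ α := Real.rpow_nonneg hP.le _
  have e1 : (m : ℝ) ^ (-α) * (((m : ℝ) + 1) ^ α / α - 1 / α) ≤ (m : ℝ) ^ (-α) * A α m :=
    mul_le_mul_of_nonneg_left hA hu
  have e2 : (m : ℝ) ^ α * (((m : ℝ) + 1) ^ (-α) / α) ≤ (m : ℝ) ^ α * B α m :=
    mul_le_mul_of_nonneg_left hB hp
  rw [T]
  have e3 : ((m : ℝ) ^ (-α) * ((m : ℝ) + 1) ^ α - (m : ℝ) ^ (-α)
      + (m : ℝ) ^ α * ((m : ℝ) + 1) ^ (-α)) / α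
      = (m : ℝ) ^ (-α) * (((m : ℝ) + 1) ^ α / α - 1 / α)
        + (m : ℝ) ^ α * (((m : ℝ) + 1) ^ (-α) / α) := by
    field_simp
  linarith [e1, e2]

lemma tendsto_ratio1 {α : ℝ} (hα : 0 < α) :
    Tendsto (fun x : ℝ => x ^ (-α) * (x + 1) ^ α) atTop (nhds 1) := by
  have hb : Tendsto (fun x : ℝ => (x + 1) / x) atTop (nhds 1) := by
    have h : Tendsto (fun x : ℝ => 1 + x⁻¹) atTop (nhds (1 + 0)) :=
      tendsto_const_nhds.add tendsto_inv_atTop_zero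
    rw [add_zero] at h
    refine h.congr' ?_
    filter_upwards [eventually_gt_atTop (0 : ℝ)] with x hx
    field_simp
  have hc : ContinuousAt (fun y : ℝ => y ^ α) 1 :=
    Real.continuousAt_rpow_const 1 α (Or.inl one_ne_zero)
  have h := hc.tendsto.comp hb
  rw [Real.one_rpow] at h
  refine h.congr' ?_
  filter_upwards [eventually_gt_atTop (0 : ℝ)] with x hx
  show ((x + 1) / x) ^ α = x ^ (-α) * (x + 1) ^ α
  rw [Real.div_rpow (by linarith) hx.le, Real.rpow_neg hx.le, div_eq_mul_inv, mul_comm]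

lemma tendsto_ratio2 {α : ℝ} (hα : 0 < α) :
    Tendsto (fun x : ℝ => x ^ α * (x + 1) ^ (-α)) atTop (nhds 1) := by
  have hb : Tendsto (fun x : ℝ => x / (x + 1)) atTop (nhds 1) := by
    have h0 : Tendsto (fun x : ℝ => x + 1) atTop atTop :=
      tendsto_atTop_add_const_right _ 1 tendsto_id
    have h : Tendsto (fun x : ℝ => 1 - (x + 1)⁻¹) atTop (nhds (1 - 0)) :=
      tendsto_const_nhds.sub h0.inv_tendsto_atTop
    rw [sub_zero] at h
    refine h.congr' ?_
    filter_upwards [eventually_gt_atTop (0 : ℝ)] with x hx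
    have : x + 1 ≠ 0 := by linarith
    field_simp
    ring
  have hc : ContinuousAt (fun y : ℝ => y ^ α) 1 :=
    Real.continuousAt_rpow_const 1 α (Or.inl one_ne_zero)
  have h := hc.tendsto.comp hb
  rw [Real.one_rpow] at h
  refine h.congr' ?_
  filter_upwards [eventually_gt_atTop (0 : ℝ)] with x hx
  show (x / (x + 1)) ^ α = x ^ α * (x + 1) ^ (-α)
  rw [Real.div_rpow hx.le (by linarith), Real.rpow_neg (by linarith), div_eq_mul_inv]

lemma tendsto_lower {α : ℝ} (hα : 0 < α) :
    Tendsto (fun x : ℝ =>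
      (x ^ (-α) * (x + 1) ^ α - x ^ (-α) + x ^ α * (x + 1) ^ (-α)) / α)
      atTop (nhds (2 / α)) := by
  have h := ((tendsto_ratio1 hα).sub (tendsto_rpow_neg_atTop hα)).add (tendsto_ratio2 hα)
  have h2 := h.div_const α
  rw [show (2:ℝ)/α = (1 - 0 + 1)/α by norm_num]
  exact h2

lemma tendsto_pnat_cast : Tendsto (fun m : ℕ+ => (m : ℝ)) atTop atTop := by
  apply tendsto_atTop_atTop_of_monotone
  · intro a b hab
    have h : (a : ℕ) ≤ (b : ℕ) := hab
    show ((a : ℕ) : ℝ) ≤ ((b : ℕ) : ℝ)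
    exact_mod_cast h
  · intro b
    obtain ⟨n, hn⟩ := exists_nat_ge b
    refine ⟨⟨n + 1, Nat.succ_pos n⟩, ?_⟩
    show b ≤ ((n + 1 : ℕ) : ℝ)
    push_cast
    linarith

end SAux

theorem monotone_S_of_le_one (α : ℝ) (hα : 0 < α) (hα1 : α ≤ 1) :
    Monotone (fun m : ℕ+ => S α m) ∧
    (⨆ m : ℕ+, S α m) = 2/α ∧
    Filter.Tendsto (fun m : ℕ+ => S α m) Filter.atTop (nhds (2/α)) := by
  classical
  have hST : ∀ m : ℕ+, S α m = SAux.T α (m : ℕ) := fun m => rfl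
  have hmono : Monotone (fun m : ℕ+ => S α m) := by
    intro a b hab
    simp only [hST]
    have key : ∀ j : ℕ, (a : ℕ) ≤ j → SAux.T α (a : ℕ) ≤ SAux.T α j := by
      intro j hj
      induction j, hj using Nat.le_induction with
      | base => exact le_refl _
      | succ n hn ih =>
        exact ih.trans (SAux.T_step hα hα1 n (le_trans a.pos hn))
    exact key (b : ℕ) (by exact_mod_cast hab)
  have hup : ∀ m : ℕ+, S α m ≤ 2 / α := fun m => by
    rw [hST]; exact SAux.T_le hα hα1 (m : ℕ) m.pos
  have hlow : ∀ m : ℕ+,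
      (((m : ℝ)) ^ (-α) * ((m : ℝ) + 1) ^ α - ((m : ℝ)) ^ (-α)
        + ((m : ℝ)) ^ α * ((m : ℝ) + 1) ^ (-α)) / α ≤ S α m := fun m => by
    rw [hST]; exact SAux.T_ge hα hα1 (m : ℕ) m.pos
  have hlim : Filter.Tendsto (fun m : ℕ+ => S α m) Filter.atTop (nhds (2/α)) := by
    refine tendsto_of_tendsto_of_tendsto_of_le_of_le
      ((SAux.tendsto_lower hα).comp SAux.tendsto_pnat_cast)
      tendsto_const_nhds (fun m => hlow m) (fun m => hup m)
  refine ⟨hmono, ?_, hlim⟩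
  have hbdd : BddAbove (Set.range fun m : ℕ+ => S α m) := by
    refine ⟨2 / α, ?_⟩
    rintro x ⟨m, rfl⟩
    exact hup m
  have h2 := tendsto_atTop_ciSup hmono hbdd
  exact tendsto_nhds_unique h2 hlim
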